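/- Let Γ be a locally compact Hausdorff topological space, let φ be a flow on Γ, let S ⊆ Γ be an isolated invariant set of φ, and let A ⊆ S be an attractor in S. Then the complementary repeller A* := {x ∈ S | ω({x}) ∩ A = ∅} is a repeller in S, the pair (A, A*) is an attractor-repeller pair in S, and in particular (A*)* = A. -/

import Mathlib

open Set

/-- A (continuous) flow on a topological space `Γ`. -/
def IsFlow {Γ : Type*} [TopologicalSpace Γ] (φ : Γ × ℝ → Γ) : Prop :=
  Continuous φ ∧ (∀ x, φ (x, 0) = x) ∧ ∀ (x : Γ) (s t : ℝ), φ (φ (x, s), t) = φ (x, s + t)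

/-- The maximal invariant subset of `U`. -/
def maxInv {Γ : Type*} (φ : Γ × ℝ → Γ) (U : Set Γ) : Set Γ :=
  {u | u ∈ U ∧ ∀ t : ℝ, φ (u, t) ∈ U}

/-- `U` is a compact (isolating) neighbourhood of `S` with `Inv U = S`. -/
def IsIsolatingNbhd {Γ : Type*} [TopologicalSpace Γ] (φ : Γ × ℝ → Γ) (U S : Set Γ) : Prop :=
  IsCompact U ∧ U ∈ nhdsSet S ∧ maxInv φ U = S

/-- `S` is an isolated invariant set of the flow `φ`. -/
def IsIsolatedInvariantSet {Γ : Type*} [TopologicalSpace Γ] (φ : Γ × ℝ → Γ) (S : Set Γ) : Prop :=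
  IsCompact S ∧ ∃ U : Set Γ, IsIsolatingNbhd φ U S

/-- `(M, N)` is an index pair for the isolated invariant set `S`. -/
def IsIndexPair {Γ : Type*} [TopologicalSpace Γ] (φ : Γ × ℝ → Γ) (S M N : Set Γ) : Prop :=
  IsCompact M ∧ IsCompact N ∧ N ⊆ M ∧
  IsIsolatingNbhd φ (closure (M \ N)) S ∧
  (∀ x ∈ N, ∀ t : ℝ, 0 ≤ t →
    (∀ s ∈ Icc (0 : ℝ) t, φ (x, s) ∈ M) → ∀ s ∈ Icc (0 : ℝ) t, φ (x, s) ∈ N) ∧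
  (∀ x ∈ M, ∀ t : ℝ, 0 ≤ t → φ (x, t) ∉ M → ∃ s ∈ Icc (0 : ℝ) t, φ (x, s) ∈ N)

/-- The ω-limit `ω(T)`: the maximal invariant set of the closure of the forward orbit of `T`. -/
def omegaSet {Γ : Type*} [TopologicalSpace Γ] (φ : Γ × ℝ → Γ) (T : Set Γ) : Set Γ :=
  maxInv φ (closure (φ '' (T ×ˢ Ici (0 : ℝ))))

/-- The ω*-limit `ω*(T)`: the maximal invariant set of the closure of the backward orbit of `T`. -/
def omegaStarSet {Γ : Type*} [TopologicalSpace Γ] (φ : Γ × ℝ → Γ) (T : Set Γ) : Set Γ :=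
  maxInv φ (closure (φ '' (T ×ˢ Iic (0 : ℝ))))

/-- `A` is an attractor in the isolated invariant set `S`: there is a neighbourhood `U` of `A`
in the subspace `S` with `A = ω(U)`. -/
def IsAttractorIn {Γ : Type*} [TopologicalSpace Γ] (φ : Γ × ℝ → Γ) (S A : Set Γ) : Prop :=
  A ⊆ S ∧ ∃ U : Set Γ, U ⊆ S ∧ (∃ V : Set Γ, IsOpen V ∧ A ⊆ V ∧ V ∩ S ⊆ U) ∧ omegaSet φ U = A

/-- `R` is a repeller in the isolated invariant set `S`: there is a neighbourhood `U` of `R`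
in the subspace `S` with `R = ω*(U)`. -/
def IsRepellerIn {Γ : Type*} [TopologicalSpace Γ] (φ : Γ × ℝ → Γ) (S R : Set Γ) : Prop :=
  R ⊆ S ∧ ∃ U : Set Γ, U ⊆ S ∧ (∃ V : Set Γ, IsOpen V ∧ R ⊆ V ∧ V ∩ S ⊆ U) ∧ omegaStarSet φ U = R

/-- The complementary repeller `A* = {x ∈ S | ω({x}) ∩ A = ∅}` of an attractor `A ⊆ S`. -/
def compRepeller {Γ : Type*} [TopologicalSpace Γ] (φ : Γ × ℝ → Γ) (S A : Set Γ) : Set Γ :=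
  {x ∈ S | omegaSet φ {x} ∩ A = ∅}

/-- The complementary attractor `R* = {x ∈ S | ω*({x}) ∩ R = ∅}` of a repeller `R ⊆ S`. -/
def compAttractor {Γ : Type*} [TopologicalSpace Γ] (φ : Γ × ℝ → Γ) (S R : Set Γ) : Set Γ :=
  {x ∈ S | omegaStarSet φ {x} ∩ R = ∅}

/-- `(A, R)` is an attractor-repeller pair in `S`. -/
def IsAttractorRepellerPair {Γ : Type*} [TopologicalSpace Γ] (φ : Γ × ℝ → Γ)
    (S A R : Set Γ) : Prop :=
  IsAttractorIn φ S A ∧ IsRepellerIn φ S R ∧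
    A = compAttractor φ S R ∧ R = compRepeller φ S A

set_option linter.unusedSectionVars false

namespace ConleyAux

variable {Γ : Type*} [TopologicalSpace Γ] {φ : Γ × ℝ → Γ}

theorem maxInv_subset (K : Set Γ) : maxInv φ K ⊆ K := fun _ h => h.1

theorem flow_mem_maxInv (hadd : ∀ (x : Γ) (s t : ℝ), φ (φ (x, s), t) = φ (x, s + t))
    {K : Set Γ} {u : Γ} (hu : u ∈ maxInv φ K) (t : ℝ) : φ (u, t) ∈ maxInv φ K :=
  ⟨hu.2 t, fun s => by rw [hadd]; exact hu.2 (t + s)⟩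

theorem maxInv_mono {K K' : Set Γ} (h : K ⊆ K') : maxInv φ K ⊆ maxInv φ K' :=
  fun _ hu => ⟨h hu.1, fun t => h (hu.2 t)⟩

theorem isClosed_maxInv (hc : Continuous φ) (h0 : ∀ x, φ (x, 0) = x)
    {K : Set Γ} (hK : IsClosed K) : IsClosed (maxInv φ K) := by
  have he : maxInv φ K = ⋂ t : ℝ, (fun u => φ (u, t)) ⁻¹' K := by
    ext u
    constructor
    · exact fun hu => mem_iInter.2 fun t => hu.2 t
    · intro hu
      have h2 := mem_iInter.1 hu
      exact ⟨by simpa [h0] using h2 0, h2⟩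
  rw [he]
  exact isClosed_iInter fun t => hK.preimage (hc.comp (continuous_id.prodMk continuous_const))

/-- forward orbit of `T` from time `a` on. -/
def fwd (φ : Γ × ℝ → Γ) (T : Set Γ) (a : ℝ) : Set Γ := φ '' (T ×ˢ Ici a)

theorem mem_fwd {T : Set Γ} {x : Γ} {a t : ℝ} (hx : x ∈ T) (ht : a ≤ t) :
    φ (x, t) ∈ fwd φ T a := ⟨(x, t), ⟨hx, ht⟩, rfl⟩

theorem fwd_mono_left {T T' : Set Γ} (h : T ⊆ T') (a : ℝ) : fwd φ T a ⊆ fwd φ T' a :=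
  image_mono (prod_mono_left h)

theorem fwd_mono_right {T : Set Γ} {a b : ℝ} (h : a ≤ b) : fwd φ T b ⊆ fwd φ T a :=
  image_mono (prod_mono_right (Ici_subset_Ici.2 h))

theorem flow_closure_fwd (hc : Continuous φ)
    (hadd : ∀ (x : Γ) (s t : ℝ), φ (φ (x, s), t) = φ (x, s + t))
    {T : Set Γ} {a : ℝ} {y : Γ} (hy : y ∈ closure (fwd φ T a)) (t : ℝ) :
    φ (y, t) ∈ closure (fwd φ T (a + t)) := by
  have hmap : (fun u => φ (u, t)) '' fwd φ T a ⊆ fwd φ T (a + t) := by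
    rintro _ ⟨_, ⟨⟨x, s⟩, ⟨hxT, hs⟩, rfl⟩, rfl⟩
    show φ (φ (x, s), t) ∈ fwd φ T (a + t)
    rw [hadd]
    exact mem_fwd hxT (by have := mem_Ici.1 hs; linarith)
  have h2 := image_closure_subset_closure_image (s := fwd φ T a)
    (f := fun u => φ (u, t)) (hc.comp (continuous_id.prodMk continuous_const))
  exact closure_mono hmap (h2 ⟨y, hy, rfl⟩)

theorem fwd_subset_of_inv {K T : Set Γ} {a : ℝ}
    (hinv : ∀ x ∈ K, ∀ t : ℝ, φ (x, t) ∈ K) (hT : T ⊆ K) : fwd φ T a ⊆ K := by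
  rintro _ ⟨⟨x, s⟩, ⟨hx, _⟩, rfl⟩
  exact hinv x (hT hx) s

/-- the time-reversed flow. -/
def rev (φ : Γ × ℝ → Γ) : Γ × ℝ → Γ := fun p => φ (p.1, -p.2)

theorem rev_continuous (hc : Continuous φ) : Continuous (rev φ) :=
  hc.comp (continuous_fst.prodMk continuous_snd.neg)

theorem rev_zero (h0 : ∀ x, φ (x, 0) = x) : ∀ x, rev φ (x, 0) = x := fun x => by
  simp only [rev, neg_zero]; exact h0 x

theorem rev_add (hadd : ∀ (x : Γ) (s t : ℝ), φ (φ (x, s), t) = φ (x, s + t)) :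
    ∀ (x : Γ) (s t : ℝ), rev φ (rev φ (x, s), t) = rev φ (x, s + t) := fun x s t => by
  simp only [rev, hadd, neg_add]

theorem maxInv_rev (K : Set Γ) : maxInv (rev φ) K = maxInv φ K := by
  ext u
  constructor
  · rintro ⟨h1, h2⟩
    refine ⟨h1, fun t => ?_⟩
    have := h2 (-t)
    simpa only [rev, neg_neg] using this
  · rintro ⟨h1, h2⟩
    exact ⟨h1, fun t => h2 (-t)⟩

theorem rev_image (T : Set Γ) (a : ℝ) :
    rev φ '' (T ×ˢ Ici a) = φ '' (T ×ˢ Iic (-a)) := by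
  ext y
  constructor
  · rintro ⟨⟨x, s⟩, ⟨hx, hs⟩, rfl⟩
    exact ⟨(x, -s), ⟨hx, by have := mem_Ici.1 hs; simp only [mem_Iic]; linarith⟩, rfl⟩
  · rintro ⟨⟨x, s⟩, ⟨hx, hs⟩, rfl⟩
    refine ⟨(x, -s), ⟨hx, by have := mem_Iic.1 hs; simp only [mem_Ici]; linarith⟩, ?_⟩
    simp only [rev, neg_neg]

theorem omegaStar_eq_rev (T : Set Γ) : omegaStarSet φ T = omegaSet (rev φ) T := by
  unfold omegaStarSet omegaSet
  rw [maxInv_rev, rev_image, neg_zero]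

theorem mem_omega_of_iInter (hc : Continuous φ)
    (hadd : ∀ (x : Γ) (s t : ℝ), φ (φ (x, s), t) = φ (x, s + t))
    {T : Set Γ} {y : Γ} (hy : ∀ n : ℕ, y ∈ closure (fwd φ T n)) : y ∈ omegaSet φ T := by
  constructor
  · have h := hy 0
    rw [Nat.cast_zero] at h
    exact h
  · intro t
    obtain ⟨n, hn⟩ := exists_nat_ge (-t)
    have h1 := flow_closure_fwd hc hadd (hy n) t
    exact closure_mono (fwd_mono_right (by linarith)) h1

theorem omega_nonempty [T2Space Γ] (hc : Continuous φ) (h0 : ∀ x, φ (x, 0) = x)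
    (hadd : ∀ (x : Γ) (s t : ℝ), φ (φ (x, s), t) = φ (x, s + t))
    {S : Set Γ} (hScpt : IsCompact S) (hSinv : ∀ x ∈ S, ∀ t : ℝ, φ (x, t) ∈ S)
    {x : Γ} (hx : x ∈ S) : (omegaSet φ {x}).Nonempty := by
  have hKS : ∀ n : ℕ, closure (fwd φ {x} n) ⊆ S := fun n =>
    closure_minimal (fwd_subset_of_inv hSinv (singleton_subset_iff.2 hx)) hScpt.isClosed
  have hnonempty : ∀ n : ℕ, (closure (fwd φ {x} n)).Nonempty := fun n =>
    ⟨φ (x, n), subset_closure (mem_fwd rfl le_rfl)⟩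
  have hnested : ∀ n : ℕ, closure (fwd φ {x} (n + 1 : ℕ)) ⊆ closure (fwd φ {x} n) := fun n =>
    closure_mono (fwd_mono_right (by exact_mod_cast Nat.le_succ n))
  obtain ⟨y, hy⟩ := IsCompact.nonempty_iInter_of_sequence_nonempty_isCompact_isClosed
    (fun n : ℕ => closure (fwd φ {x} n)) hnested hnonempty
    (hScpt.of_isClosed_subset isClosed_closure (hKS 0)) (fun n => isClosed_closure)
  exact ⟨y, mem_omega_of_iInter hc hadd (fun n => mem_iInter.1 hy n)⟩

theorem uniform_attract [T2Space Γ] (hc : Continuous φ) (h0 : ∀ x, φ (x, 0) = x)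
    (hadd : ∀ (x : Γ) (s t : ℝ), φ (φ (x, s), t) = φ (x, s + t))
    {S U A V₂ : Set Γ} (hScpt : IsCompact S)
    (hSinv : ∀ x ∈ S, ∀ t : ℝ, φ (x, t) ∈ S) (hUS : U ⊆ S) (hωU : omegaSet φ U = A)
    (hV₂ : IsOpen V₂) (hAV₂ : A ⊆ V₂) :
    ∃ T : ℕ, ∀ u ∈ U, ∀ t : ℝ, (T : ℝ) ≤ t → φ (u, t) ∈ V₂ := by
  by_contra hcon
  push_neg at hcon
  set D : ℕ → Set Γ := fun n => closure (fwd φ U n) ∩ V₂ᶜ with hD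
  have hDnonempty : ∀ n, (D n).Nonempty := by
    intro n
    obtain ⟨u, hu, t, ht, hnot⟩ := hcon n
    exact ⟨φ (u, t), subset_closure (mem_fwd hu ht), hnot⟩
  have hDclosed : ∀ n, IsClosed (D n) := fun n => isClosed_closure.inter hV₂.isClosed_compl
  have hD0S : D 0 ⊆ S := fun y hy =>
    closure_minimal (fwd_subset_of_inv hSinv hUS) hScpt.isClosed hy.1
  have hnested : ∀ n : ℕ, D (n + 1) ⊆ D n := fun n =>
    inter_subset_inter_left _ (closure_mono (fwd_mono_right (by exact_mod_cast Nat.le_succ n)))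
  obtain ⟨y, hy⟩ := IsCompact.nonempty_iInter_of_sequence_nonempty_isCompact_isClosed
    D hnested hDnonempty (hScpt.of_isClosed_subset (hDclosed 0) hD0S) hDclosed
  have hyA : y ∈ A :=
    hωU ▸ mem_omega_of_iInter hc hadd (fun n => (mem_iInter.1 hy n).1)
  exact (mem_iInter.1 hy 0).2 (hAV₂ hyA)

theorem omega_shift (hadd : ∀ (x : Γ) (s t : ℝ), φ (φ (x, s), t) = φ (x, s + t))
    {y : Γ} {τ : ℝ} (hτ : 0 ≤ τ) : omegaSet φ {φ (y, τ)} ⊆ omegaSet φ {y} := by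
  apply maxInv_mono
  apply closure_mono
  rintro _ ⟨⟨z, s⟩, ⟨hz, hs⟩, rfl⟩
  rw [mem_singleton_iff] at hz
  subst hz
  show φ (φ (y, τ), s) ∈ _
  rw [hadd]
  exact mem_fwd rfl (by have := mem_Ici.1 hs; linarith)

theorem entry_iff [T2Space Γ] (hc : Continuous φ) (h0 : ∀ x, φ (x, 0) = x)
    (hadd : ∀ (x : Γ) (s t : ℝ), φ (φ (x, s), t) = φ (x, s + t))
    {S U A V : Set Γ} (hScpt : IsCompact S)
    (hSinv : ∀ x ∈ S, ∀ t : ℝ, φ (x, t) ∈ S) (hUS : U ⊆ S)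
    (hV : IsOpen V) (hAV : A ⊆ V) (hVU : V ∩ S ⊆ U) (hωU : omegaSet φ U = A)
    {x : Γ} (hx : x ∈ S) :
    (omegaSet φ {x} ∩ A).Nonempty ↔ ∃ t : ℝ, 0 ≤ t ∧ φ (x, t) ∈ V := by
  constructor
  · rintro ⟨a, ha, haA⟩
    have h1 : a ∈ closure (fwd φ {x} 0) := ha.1
    rcases mem_closure_iff.1 h1 V hV (hAV haA) with ⟨_, hbV, ⟨⟨x', t⟩, ⟨hx', ht⟩, rfl⟩⟩
    rw [mem_singleton_iff] at hx'
    subst hx'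
    exact ⟨t, mem_Ici.1 ht, hbV⟩
  · rintro ⟨t, ht, htV⟩
    have hU' : φ (x, t) ∈ U := hVU ⟨htV, hSinv x hx t⟩
    obtain ⟨a, ha⟩ := omega_nonempty hc h0 hadd hScpt hSinv (hSinv x hx t)
    refine ⟨a, omega_shift hadd ht ha, ?_⟩
    have h2 : omegaSet φ {φ (x, t)} ⊆ A :=
      hωU ▸ maxInv_mono (closure_mono (fwd_mono_left (singleton_subset_iff.2 hU') 0))
    exact h2 ha

theorem omega_subset_attractor [T2Space Γ] (hc : Continuous φ) (h0 : ∀ x, φ (x, 0) = x)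
    (hadd : ∀ (x : Γ) (s t : ℝ), φ (φ (x, s), t) = φ (x, s + t))
    {S U A V : Set Γ} (hScpt : IsCompact S)
    (hSinv : ∀ x ∈ S, ∀ t : ℝ, φ (x, t) ∈ S) (hUS : U ⊆ S)
    (hV : IsOpen V) (hAV : A ⊆ V) (hVU : V ∩ S ⊆ U) (hωU : omegaSet φ U = A)
    {x : Γ} (hx : x ∈ S) (hne : (omegaSet φ {x} ∩ A).Nonempty) :
    omegaSet φ {x} ⊆ A := by
  obtain ⟨t0, ht0, ht0V⟩ := (entry_iff hc h0 hadd hScpt hSinv hUS hV hAV hVU hωU hx).1 hne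
  obtain ⟨T, hT⟩ := uniform_attract hc h0 hadd hScpt hSinv hUS hωU hV hAV
  set t1 : ℝ := t0 + T with ht1def
  have hTnn : (0 : ℝ) ≤ T := Nat.cast_nonneg T
  have ht1 : 0 ≤ t1 := by rw [ht1def]; linarith
  have htail : ∀ t : ℝ, t1 ≤ t → φ (x, t) ∈ U := by
    intro t ht
    have h1 : φ (x, t0) ∈ U := hVU ⟨ht0V, hSinv x hx t0⟩
    have h2 : φ (φ (x, t0), t - t0) ∈ V := hT _ h1 _ (by rw [ht1def] at ht; linarith)
    rw [hadd, show t0 + (t - t0) = t by ring] at h2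
    exact hVU ⟨h2, hSinv x hx t⟩
  set C := closure (fwd φ U 0) with hCdef
  have hCA : maxInv φ C = A := hωU
  have hCfwd : ∀ c ∈ C, ∀ t : ℝ, 0 ≤ t → φ (c, t) ∈ C := by
    intro c hcC t ht
    exact closure_mono (fwd_mono_right (by linarith)) (flow_closure_fwd hc hadd hcC t)
  have hUC : U ⊆ C := fun u hu => subset_closure ⟨(u, 0), ⟨hu, self_mem_Ici⟩, h0 u⟩
  have hseg_closed : IsClosed (φ '' ({x} ×ˢ Icc 0 t1)) :=
    ((isCompact_singleton.prod isCompact_Icc).image hc).isClosed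
  have horb : omegaSet φ {x} ⊆ φ '' ({x} ×ˢ Icc 0 t1) ∪ C := by
    intro y hy
    have h1 : y ∈ closure (fwd φ {x} 0) := hy.1
    have hsplit : fwd φ {x} 0 = φ '' ({x} ×ˢ Icc 0 t1) ∪ fwd φ {x} t1 := by
      show φ '' ({x} ×ˢ Ici (0 : ℝ)) = φ '' ({x} ×ˢ Icc 0 t1) ∪ φ '' ({x} ×ˢ Ici t1)
      rw [← image_union, ← prod_union, Icc_union_Ici_eq_Ici ht1]
    have h3 : fwd φ {x} t1 ⊆ fwd φ U 0 := by
      rintro _ ⟨⟨x', t⟩, ⟨hx', ht⟩, rfl⟩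
      have hx2 : x' = x := hx'
      have ht' : t1 ≤ t := ht
      show φ (x', t) ∈ φ '' (U ×ˢ Ici (0:ℝ))
      rw [hx2]
      refine ⟨(φ (x, t1), t - t1), ⟨htail t1 le_rfl, by simp only [mem_Ici]; linarith⟩, ?_⟩
      show φ (φ (x, t1), t - t1) = φ (x, t)
      rw [hadd, show t1 + (t - t1) = t by ring]
    have h2 : closure (fwd φ {x} 0) ⊆ φ '' ({x} ×ˢ Icc 0 t1) ∪ closure (fwd φ {x} t1) := by
      rw [hsplit, closure_union, hseg_closed.closure_eq]
    rcases h2 h1 with h | h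
    · exact Or.inl h
    · exact Or.inr (closure_mono h3 h)
  intro y hy
  by_cases hall : ∀ s : ℝ, φ (y, s) ∈ C
  · rw [← hCA]
    exact ⟨by have := hall 0; rwa [h0] at this, hall⟩
  push_neg at hall
  obtain ⟨s, hsC⟩ := hall
  have hys : φ (y, s) ∈ omegaSet φ {x} := flow_mem_maxInv hadd hy s
  rcases horb hys with hseg | hmem
  swap
  · exact absurd hmem hsC
  obtain ⟨⟨x', u⟩, ⟨hx', hu⟩, hphi⟩ := hseg
  rw [mem_singleton_iff] at hx'
  rw [show (x', u).1 = x' from rfl] at hx'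
  rw [hx'] at hphi
  have hyx : y = φ (x, u - s) := by
    have h4 := congrArg (fun z => φ (z, -s)) hphi
    rw [hadd, hadd, show s + -s = (0 : ℝ) by ring, h0,
      show u + -s = u - s by ring] at h4
    exact h4.symm
  have horbx : ∀ r : ℝ, φ (x, r) ∈ omegaSet φ {x} := by
    intro r
    have h5 := flow_mem_maxInv hadd hy (r - (u - s))
    rw [hyx, hadd, show u - s + (r - (u - s)) = r by ring] at h5
    exact h5
  by_cases hinf : ∀ n : ℕ, ∃ r : ℝ, r ≤ -(n : ℝ) ∧ φ (x, r) ∈ C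
  · have horbC : ∀ t : ℝ, φ (x, t) ∈ C := by
      intro t
      obtain ⟨n, hn⟩ := exists_nat_ge (-t)
      obtain ⟨r, hr, hrC⟩ := hinf n
      have h6 := hCfwd _ hrC (t - r) (by linarith)
      rwa [hadd, show r + (t - r) = t by ring] at h6
    rw [← hCA]
    exact ⟨by rw [hyx]; exact horbC _, fun t => by rw [hyx, hadd]; exact horbC _⟩
  · push_neg at hinf
    obtain ⟨n, hn⟩ := hinf
    set r0 : ℝ := -(n : ℝ) - t1 - 1 with hr0
    have hnn : (0 : ℝ) ≤ (n : ℝ) := Nat.cast_nonneg n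
    have hr0n : r0 ≤ -(n : ℝ) := by rw [hr0]; linarith
    rcases horb (horbx r0) with hseg2 | hmem2
    swap
    · exact absurd hmem2 (hn r0 hr0n)
    obtain ⟨⟨x', w⟩, ⟨hx', hw⟩, hphi2⟩ := hseg2
    have hx2 : x' = x := hx'
    rw [hx2] at hphi2
    have hw0 := hw.1
    have hw1 := hw.2
    set p : ℝ := w - r0 with hpdef
    have hppos : 1 ≤ p := by rw [hpdef, hr0]; linarith
    have hper : φ (x, p) = x := by
      have h7 := congrArg (fun z => φ (z, -r0)) hphi2
      rw [hadd, hadd, show r0 + -r0 = (0 : ℝ) by ring, h0,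
        show w + -r0 = p by rw [hpdef]; ring] at h7
      exact h7
    have hstep : ∀ t : ℝ, φ (x, t + p) = φ (x, t) := by
      intro t
      calc φ (x, t + p) = φ (x, p + t) := by rw [add_comm]
        _ = φ (φ (x, p), t) := (hadd x p t).symm
        _ = φ (x, t) := by rw [hper]
    have hiter : ∀ (k : ℕ) (t : ℝ), φ (x, t + k * p) = φ (x, t) := by
      intro k
      induction k with
      | zero => intro t; simp
      | succ k ih =>
        intro t
        have h8 : t + ((k : ℕ) + 1 : ℕ) * p = (t + k * p) + p := by push_cast; ring
        rw [h8, hstep, ih]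
    have horbC : ∀ t : ℝ, φ (x, t) ∈ C := by
      intro t
      obtain ⟨k, hk⟩ := exists_nat_ge (t1 - t)
      have hknn : (0 : ℝ) ≤ (k : ℝ) := Nat.cast_nonneg k
      have hk2 : (k : ℝ) * 1 ≤ (k : ℝ) * p := mul_le_mul_of_nonneg_left hppos hknn
      have hk' : t1 ≤ t + k * p := by linarith
      have h9 := htail (t + k * p) hk'
      rw [hiter k t] at h9
      exact hUC h9
    rw [← hCA]
    exact ⟨by rw [hyx]; exact horbC _, fun t => by rw [hyx, hadd]; exact horbC _⟩

theorem mem_attractor_of_bwd [T2Space Γ] (hc : Continuous φ) (h0 : ∀ x, φ (x, 0) = x)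
    (hadd : ∀ (x : Γ) (s t : ℝ), φ (φ (x, s), t) = φ (x, s + t))
    {S U A V : Set Γ}
    (hSinv : ∀ x ∈ S, ∀ t : ℝ, φ (x, t) ∈ S)
    (hV : IsOpen V) (hAV : A ⊆ V) (hVU : V ∩ S ⊆ U) (hωU : omegaSet φ U = A)
    {x : Γ} (hx : x ∈ S)
    (hne : (closure (φ '' ({x} ×ˢ Iic (0 : ℝ))) ∩ A).Nonempty) : x ∈ A := by
  obtain ⟨a, haC, haA⟩ := hne
  have hAinv : ∀ z ∈ A, ∀ t : ℝ, φ (z, t) ∈ A := fun z hz t => by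
    rw [← hωU] at hz ⊢
    exact flow_mem_maxInv hadd hz t
  by_cases hinf : ∀ n : ℕ, ∃ s : ℝ, s ≤ -(n : ℝ) ∧ φ (x, s) ∈ V
  · rw [← hωU]
    have hC : ∀ t : ℝ, φ (x, t) ∈ fwd φ U 0 := by
      intro t
      obtain ⟨n, hn⟩ := exists_nat_ge (-t)
      obtain ⟨s, hs, hsV⟩ := hinf n
      refine ⟨(φ (x, s), t - s), ⟨hVU ⟨hsV, hSinv x hx s⟩, by simp only [mem_Ici]; linarith⟩, ?_⟩
      show φ (φ (x, s), t - s) = φ (x, t)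
      rw [hadd, show s + (t - s) = t by ring]
    exact ⟨subset_closure (by have := hC 0; rwa [h0] at this), fun t => subset_closure (hC t)⟩
  · push_neg at hinf
    obtain ⟨n, hn⟩ := hinf
    have hsplit : φ '' ({x} ×ˢ Iic (0 : ℝ)) =
        φ '' ({x} ×ˢ Iic (-(n : ℝ))) ∪ φ '' ({x} ×ˢ Icc (-(n : ℝ)) 0) := by
      rw [← image_union, ← prod_union, Iic_union_Icc_eq_Iic (neg_nonpos.2 (Nat.cast_nonneg n))]
    have hbV : closure (φ '' ({x} ×ˢ Iic (-(n : ℝ)))) ⊆ Vᶜ := by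
      apply closure_minimal ?_ hV.isClosed_compl
      rintro _ ⟨⟨x', s⟩, ⟨hx', hs⟩, rfl⟩
      have hx2 : x' = x := hx'
      show φ (x', s) ∈ Vᶜ
      rw [hx2]
      exact hn s (mem_Iic.1 hs)
    have hsegcl : IsClosed (φ '' ({x} ×ˢ Icc (-(n : ℝ)) 0)) :=
      ((isCompact_singleton.prod isCompact_Icc).image hc).isClosed
    have h3 : closure (φ '' ({x} ×ˢ Iic (0 : ℝ))) ⊆
        closure (φ '' ({x} ×ˢ Iic (-(n : ℝ)))) ∪ φ '' ({x} ×ˢ Icc (-(n : ℝ)) 0) := by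
      rw [hsplit, closure_union, hsegcl.closure_eq]
    have h2 : a ∈ φ '' ({x} ×ˢ Icc (-(n : ℝ)) 0) := by
      rcases h3 haC with h | h
      · exact absurd (hAV haA) (hbV h)
      · exact h
    obtain ⟨⟨x', u⟩, ⟨hx', hu⟩, hphi⟩ := h2
    have hx2 : x' = x := hx'
    rw [hx2] at hphi
    have hxa : x = φ (a, -u) := by
      rw [← hphi, hadd, show u + -u = (0 : ℝ) by ring, h0]
    rw [hxa]
    exact hAinv a haA (-u)

end ConleyAux


/-- If `A` is an attractor in an isolated invariant set `S`, then its complementary repeller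
`A*` is a repeller in `S`, `(A, A*)` is an attractor-repeller pair, and `(A*)* = A`. -/
theorem compRepeller_isRepeller_and_pair
    {Γ : Type*} [TopologicalSpace Γ] [LocallyCompactSpace Γ] [T2Space Γ]
    (φ : Γ × ℝ → Γ) (hφ : IsFlow φ) (S : Set Γ) (hS : IsIsolatedInvariantSet φ S)
    (A : Set Γ) (hA : IsAttractorIn φ S A) :
    IsRepellerIn φ S (compRepeller φ S A) ∧
    IsAttractorRepellerPair φ S A (compRepeller φ S A) ∧
    compAttractor φ S (compRepeller φ S A) = A := by
  obtain ⟨hc, h0, hadd⟩ := hφ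
  obtain ⟨hScpt, Uiso, hUiso⟩ := hS
  have hSinv : ∀ x ∈ S, ∀ t : ℝ, φ (x, t) ∈ S := by
    intro x hx t
    rw [← hUiso.2.2] at hx ⊢
    exact ConleyAux.flow_mem_maxInv hadd hx t
  obtain ⟨hAS, U, hUS, ⟨V, hVo, hAV, hVU⟩, hωU⟩ := hA
  set R := compRepeller φ S A with hRdef
  have hRS : R ⊆ S := fun x hx => hx.1
  have hAinv : ∀ z ∈ A, ∀ t : ℝ, φ (z, t) ∈ A := fun z hz t => by
    rw [← hωU] at hz ⊢
    exact ConleyAux.flow_mem_maxInv hadd hz t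
  have hAclosed : IsClosed A := hωU ▸ ConleyAux.isClosed_maxInv hc h0 isClosed_closure
  have hAcpt : IsCompact A := hScpt.of_isClosed_subset hAclosed hAS
  have hRchar : ∀ x ∈ S, (x ∉ R ↔ ∃ t : ℝ, 0 ≤ t ∧ φ (x, t) ∈ V) := by
    intro x hx
    constructor
    · intro hxR
      have h1 : omegaSet φ {x} ∩ A ≠ ∅ := fun h => hxR ⟨hx, h⟩
      exact (ConleyAux.entry_iff hc h0 hadd hScpt hSinv hUS hVo hAV hVU hωU hx).1
        (nonempty_iff_ne_empty.2 h1)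
    · intro ht hxR
      exact (nonempty_iff_ne_empty.1
        ((ConleyAux.entry_iff hc h0 hadd hScpt hSinv hUS hVo hAV hVU hωU hx).2 ht)) hxR.2
  have hRinv : ∀ x ∈ R, ∀ t : ℝ, φ (x, t) ∈ R := by
    intro x hxR t
    have hxS := hxR.1
    have hxtS : φ (x, t) ∈ S := hSinv x hxS t
    by_contra hcon
    obtain ⟨s, hs, hsV⟩ := (hRchar _ hxtS).1 hcon
    rw [hadd] at hsV
    rcases le_or_gt 0 (t + s) with hts | hts
    · exact ((hRchar x hxS).2 ⟨t + s, hts, hsV⟩) hxR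
    · have hyU : φ (x, t + s) ∈ U := hVU ⟨hsV, hSinv x hxS (t + s)⟩
      have h1 : omegaSet φ {x} ⊆ A := by
        have h2 : omegaSet φ {x} = omegaSet φ {φ (φ (x, t + s), -(t + s))} := by
          rw [hadd, show (t + s) + -(t + s) = (0 : ℝ) by ring, h0]
        rw [h2]
        calc omegaSet φ {φ (φ (x, t + s), -(t + s))}
            ⊆ omegaSet φ {φ (x, t + s)} := ConleyAux.omega_shift hadd (by linarith)
          _ ⊆ omegaSet φ U := ConleyAux.maxInv_mono
              (closure_mono (ConleyAux.fwd_mono_left (singleton_subset_iff.2 hyU) 0))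
          _ = A := hωU
      obtain ⟨z, hz⟩ := ConleyAux.omega_nonempty hc h0 hadd hScpt hSinv hxS
      have h3 : z ∈ omegaSet φ {x} ∩ A := ⟨hz, h1 hz⟩
      rw [hxR.2] at h3
      exact h3
  have hRclosed : IsClosed R := by
    have he : R = S ∩ (⋃ t ∈ Ici (0 : ℝ), (fun x => φ (x, t)) ⁻¹' V)ᶜ := by
      ext x
      simp only [mem_inter_iff, mem_compl_iff, mem_iUnion, mem_preimage, mem_Ici,
        exists_prop]
      constructor
      · intro hxR
        refine ⟨hxR.1, fun hex => ?_⟩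
        obtain ⟨t, ht, htV⟩ := hex
        exact ((hRchar x hxR.1).2 ⟨t, ht, htV⟩) hxR
      · rintro ⟨hxS, hnot⟩
        by_contra hxR
        obtain ⟨t, ht, htV⟩ := (hRchar x hxS).1 hxR
        exact hnot ⟨t, ht, htV⟩
    rw [he]
    exact hScpt.isClosed.inter (isOpen_biUnion (fun t _ =>
      hVo.preimage (hc.comp (continuous_id.prodMk continuous_const)))).isClosed_compl
  have hRcpt : IsCompact R := hScpt.of_isClosed_subset hRclosed hRS
  have hAR : Disjoint A R := by
    rw [disjoint_left]
    intro x hxA hxR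
    obtain ⟨z, hz⟩ := ConleyAux.omega_nonempty hc h0 hadd hScpt hSinv (hAS hxA)
    have hzA : z ∈ A := by
      have h1 : ConleyAux.fwd φ {x} 0 ⊆ A :=
        ConleyAux.fwd_subset_of_inv hAinv (singleton_subset_iff.2 hxA)
      exact closure_minimal h1 hAclosed hz.1
    have h3 : z ∈ omegaSet φ {x} ∩ A := ⟨hz, hzA⟩
    rw [hxR.2] at h3
    exact h3
  obtain ⟨U1, U2, hU1o, hU2o, hAU1, hRU2, hU12⟩ :=
    SeparatedNhds.of_isCompact_isCompact hAcpt hRcpt hAR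
  set V₂ : Set Γ := V ∩ U1 with hV₂def
  have hV₂o : IsOpen V₂ := hVo.inter hU1o
  have hAV₂ : A ⊆ V₂ := subset_inter hAV hAU1
  have hV₂U : V₂ ∩ S ⊆ U := fun x hx => hVU ⟨hx.1.1, hx.2⟩
  set W : Set Γ := S \ V₂ with hWdef
  have hWS : W ⊆ S := diff_subset
  have hRW : R ⊆ W := fun x hx =>
    ⟨hx.1, fun hxV₂ => (disjoint_left.1 hU12) hxV₂.2 (hRU2 hx)⟩
  have hWbS : closure (φ '' (W ×ˢ Iic (0 : ℝ))) ⊆ S := by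
    apply closure_minimal ?_ hScpt.isClosed
    rintro _ ⟨⟨z, s⟩, ⟨hz, _⟩, rfl⟩
    exact hSinv z (hWS hz) s
  have hRsub : R ⊆ omegaStarSet φ W := by
    intro x hx
    have hx' : ∀ t : ℝ, φ (x, t) ∈ closure (φ '' (W ×ˢ Iic (0 : ℝ))) := by
      intro t
      exact subset_closure ⟨(φ (x, t), 0), ⟨hRW (hRinv x hx t), self_mem_Iic⟩, h0 _⟩
    exact ⟨by have := hx' 0; rwa [h0] at this, hx'⟩
  obtain ⟨T, hT⟩ := ConleyAux.uniform_attract hc h0 hadd hScpt hSinv hUS hωU hV₂o hAV₂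
  have hstar : omegaStarSet φ W ⊆ R := by
    intro y hy
    have hyS : y ∈ S := hWbS hy.1
    refine ⟨hyS, ?_⟩
    by_contra hne
    have hne' := nonempty_iff_ne_empty.2 hne
    have hsub := ConleyAux.omega_subset_attractor hc h0 hadd hScpt hSinv hUS hVo hAV hVU hωU
      hyS hne'
    obtain ⟨a, ha⟩ := ConleyAux.omega_nonempty hc h0 hadd hScpt hSinv hyS
    have haA : a ∈ A := hsub ha
    have haC : a ∈ closure (φ '' (W ×ˢ Iic (0 : ℝ))) := by
      have h1 : ConleyAux.fwd φ {y} 0 ⊆ closure (φ '' (W ×ˢ Iic (0 : ℝ))) := by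
        rintro _ ⟨⟨y', t⟩, ⟨hy', ht⟩, rfl⟩
        have hy2 : y' = y := hy'
        rw [hy2]
        exact hy.2 t
      exact closure_minimal h1 isClosed_closure ha.1
    have htube : {a} ×ˢ Icc (0 : ℝ) (T : ℝ) ⊆ φ ⁻¹' V₂ := by
      rintro ⟨a', τ⟩ ⟨ha', hτ⟩
      have ha2 : a' = a := ha'
      rw [mem_preimage, ha2]
      exact hAV₂ (hAinv a haA τ)
    obtain ⟨N, Mv, hNo, hMo, haN, hIccM, hNM⟩ := generalized_tube_lemma isCompact_singleton
      isCompact_Icc (hV₂o.preimage hc) htube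
    have haNV : a ∈ N ∩ V₂ := ⟨haN rfl, hAV₂ haA⟩
    obtain ⟨b, hbNV, ⟨⟨z, s⟩, ⟨hzW, hs⟩, rfl⟩⟩ :=
      mem_closure_iff.1 haC (N ∩ V₂) (hNo.inter hV₂o) haNV
    have hsle : s ≤ 0 := hs
    have hwS : φ (z, s) ∈ S := hSinv z (hWS hzW) s
    have hwU : φ (z, s) ∈ U := hV₂U ⟨hbNV.2, hwS⟩
    have hzeq : z = φ (φ (z, s), -s) := by
      rw [hadd, show s + -s = (0 : ℝ) by ring, h0]
    have hzV₂ : z ∈ V₂ := by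
      rcases le_or_gt (T : ℝ) (-s) with h | h
      · rw [hzeq]
        exact hT _ hwU _ h
      · have h5 : (φ (z, s), -s) ∈ N ×ˢ Mv :=
          ⟨hbNV.1, hIccM ⟨neg_nonneg.2 hsle, h.le⟩⟩
        have h6 := hNM h5
        rw [mem_preimage] at h6
        rw [hzeq]
        exact h6
    exact hzW.2 hzV₂
  have hωW : omegaStarSet φ W = R := Subset.antisymm hstar hRsub
  have hRep : IsRepellerIn φ S R :=
    ⟨hRS, W, hWS, ⟨U2, hU2o, hRU2, fun x hx =>
      ⟨hx.2, fun hxV₂ => disjoint_left.1 hU12 hxV₂.2 hx.1⟩⟩, hωW⟩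
  have hboS : ∀ x ∈ S, closure (φ '' ({x} ×ˢ Iic (0 : ℝ))) ⊆ S := by
    intro x hxS
    apply closure_minimal ?_ hScpt.isClosed
    rintro _ ⟨⟨x', s⟩, ⟨hx', _⟩, rfl⟩
    have hx2 : x' = x := hx'
    rw [hx2]
    exact hSinv x hxS s
  have hAeq : compAttractor φ S R = A := by
    apply Subset.antisymm
    · rintro x ⟨hxS, hxR⟩
      obtain ⟨z, hz⟩ : (omegaStarSet φ {x}).Nonempty := by
        rw [ConleyAux.omegaStar_eq_rev]
        exact ConleyAux.omega_nonempty (ConleyAux.rev_continuous hc) (ConleyAux.rev_zero h0)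
          (ConleyAux.rev_add hadd) hScpt (fun w hw t => hSinv w hw (-t)) hxS
      have hzS : z ∈ S := hboS x hxS hz.1
      have hzR : z ∉ R := fun h => by
        have h3 : z ∈ omegaStarSet φ {x} ∩ R := ⟨hz, h⟩
        rw [hxR] at h3
        exact h3
      have hzA : (omegaSet φ {z} ∩ A).Nonempty := by
        by_contra h
        exact hzR ⟨hzS, not_nonempty_iff_eq_empty.1 h⟩
      have hsub : omegaSet φ {z} ⊆ omegaStarSet φ {x} := by
        intro w hw
        have h1 : ConleyAux.fwd φ {z} 0 ⊆ closure (φ '' ({x} ×ˢ Iic (0 : ℝ))) := by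
          rintro _ ⟨⟨z', t⟩, ⟨hz', ht⟩, rfl⟩
          have hz2 : z' = z := hz'
          rw [hz2]
          exact (ConleyAux.flow_mem_maxInv hadd hz t).1
        exact ⟨closure_minimal h1 isClosed_closure hw.1, fun t =>
          closure_minimal h1 isClosed_closure ((ConleyAux.flow_mem_maxInv hadd hw t).1)⟩
      obtain ⟨b, hb, hbA⟩ := hzA
      exact ConleyAux.mem_attractor_of_bwd hc h0 hadd hSinv hVo hAV hVU hωU hxS
        ⟨b, (hsub hb).1, hbA⟩
    · intro x hxA
      refine ⟨hAS hxA, ?_⟩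
      rw [eq_empty_iff_forall_notMem]
      rintro z ⟨hz, hzR⟩
      have hzA : z ∈ A := by
        have h1 : φ '' ({x} ×ˢ Iic (0 : ℝ)) ⊆ A := by
          rintro _ ⟨⟨x', s⟩, ⟨hx', _⟩, rfl⟩
          have hx2 : x' = x := hx'
          rw [hx2]
          exact hAinv x hxA s
        exact closure_minimal h1 hAclosed hz.1
      exact disjoint_left.1 hAR hzA hzR
  exact ⟨hRep, ⟨⟨hAS, U, hUS, ⟨V, hVo, hAV, hVU⟩, hωU⟩, hRep, hAeq.symm, rfl⟩, hAeq⟩
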